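/- For every n ≥ 6, removing any single cycle edge v_i v_{i+1} from G_n yields a planar graph. -/

import Mathlib

open SimpleGraph

/-- `H` is a minor of `G`: there are nonempty, pairwise disjoint, connected branch
sets in `G`, one for each vertex of `H`, with an edge of `G` between the branch
sets of any two adjacent vertices of `H`. -/
def IsMinor {W V : Type*} (H : SimpleGraph W) (G : SimpleGraph V) : Prop :=
  ∃ f : W → Set V,
    (∀ w, (f w).Nonempty) ∧
    (∀ w, (G.induce (f w)).Connected) ∧
    (Pairwise fun w₁ w₂ => Disjoint (f w₁) (f w₂)) ∧
    ∀ ⦃a b⦄, H.Adj a b → ∃ u ∈ f a, ∃ v ∈ f b, G.Adj u v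

/-- Planarity, via Wagner's theorem: a graph is planar iff it has neither a `K₅`
minor nor a `K₃,₃` minor. -/
def IsPlanar {V : Type*} (G : SimpleGraph V) : Prop :=
  ¬ IsMinor (completeGraph (Fin 5)) G ∧
  ¬ IsMinor (completeBipartiteGraph (Fin 3) (Fin 3)) G

/-- The join of two graphs: their disjoint union plus all edges in between. -/
def Join {α β : Type*} (G : SimpleGraph α) (H : SimpleGraph β) :
    SimpleGraph (α ⊕ β) where
  Adj x y := match x, y with
    | .inl a, .inl b => G.Adj a b
    | .inl _, .inr _ => True
    | .inr _, .inl _ => True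
    | .inr a, .inr b => H.Adj a b
  symm := ⟨by rintro (a | a) (b | b) h <;> first | exact h.symm | trivial⟩
  loopless := ⟨by rintro (a | a) h <;> exact h.ne rfl⟩

/-- The graph `Gₙ`: a cycle on `n - 2` vertices, two poles `p = Sum.inr 0` and
`q = Sum.inr 1` adjacent to all cycle vertices, and the pole edge `pq`. -/
def Gn (n : ℕ) : SimpleGraph (Fin (n - 2) ⊕ Fin 2) :=
  Join (cycleGraph (n - 2)) (⊤ : SimpleGraph (Fin 2))

/-! ### Auxiliary infrastructure -/

section Abstract

variable {V : Type*} (G : SimpleGraph V) (p q : V) (g : V → ℕ)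

/-- `A` lies entirely before `B` in the linear order `g`. -/
def SepLt (A B : Set V) : Prop := ∀ a ∈ A, ∀ b ∈ B, g a < g b

/-- There is an edge of `G` between `A` and `B`. -/
def Link (A B : Set V) : Prop := ∃ u ∈ A, ∃ v ∈ B, G.Adj u v

/-- A nonempty connected set avoiding both poles. -/
def GoodSet (A : Set V) : Prop :=
  p ∉ A ∧ q ∉ A ∧ (G.induce A).Connected ∧ A.Nonempty

variable {G p q g}

lemma link_symm {A B : Set V} (h : Link G A B) : Link G B A := by
  obtain ⟨u, hu, v, hv, h⟩ := h; exact ⟨v, hv, u, hu, h.symm⟩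

lemma fin5_avoid2 : ∀ w1 w2 : Fin 5, ∃ a b c : Fin 5, a ≠ b ∧ a ≠ c ∧ b ≠ c ∧
    a ≠ w1 ∧ a ≠ w2 ∧ b ≠ w1 ∧ b ≠ w2 ∧ c ≠ w1 ∧ c ≠ w2 := by decide

lemma fin3_avoid2 : ∀ w1 w2 : Fin 3, ∃ a : Fin 3, a ≠ w1 ∧ a ≠ w2 := by decide

lemma fin3_avoid1 : ∀ w1 : Fin 3, ∃ x y : Fin 3, x ≠ y ∧ x ≠ w1 ∧ y ≠ w1 := by decide

/-- Discrete intermediate value theorem along a walk. -/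
lemma walk_ivt {α : Type*} {H : SimpleGraph α} {h : α → ℕ}
    (hstep : ∀ ⦃x y⦄, H.Adj x y → h x + 1 = h y ∨ h y + 1 = h x) :
    ∀ {x y : α} (_ : H.Walk x y) (k : ℕ), h x ≤ k → k ≤ h y → ∃ z, h z = k := by
  intro x y w
  induction w with
  | @nil u => exact fun k h1 h2 => ⟨u, by omega⟩
  | @cons u v y hadj w ih =>
    intro k h1 h2
    rcases eq_or_lt_of_le h1 with h1 | h1
    · exact ⟨u, h1⟩
    · refine ih k ?_ h2
      rcases hstep hadj with h | h <;> omega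

variable (hstep : ∀ ⦃u v⦄, G.Adj u v → u ≠ p → u ≠ q → v ≠ p → v ≠ q →
    (g u + 1 = g v ∨ g v + 1 = g u))
  (ginj : ∀ ⦃u v⦄, u ≠ p → u ≠ q → v ≠ p → v ≠ q → g u = g v → u = v)

include hstep in
/-- IVT for a connected pole-free set. -/
lemma set_ivt {A : Set V} (hA : GoodSet G p q A)
    {x y : V} (hx : x ∈ A) (hy : y ∈ A) {k : ℕ} (h1 : g x ≤ k) (h2 : k ≤ g y) :
    ∃ z ∈ A, g z = k := by
  obtain ⟨hp, hq, hc, -⟩ := hA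
  obtain ⟨w⟩ := hc.preconnected ⟨x, hx⟩ ⟨y, hy⟩
  have hstep' : ∀ ⦃a b : A⦄, (G.induce A).Adj a b →
      g a.1 + 1 = g b.1 ∨ g b.1 + 1 = g a.1 := by
    intro a b hab
    have h : G.Adj a.1 b.1 := hab
    exact hstep h (fun e => hp (e ▸ a.2)) (fun e => hq (e ▸ a.2))
      (fun e => hp (e ▸ b.2)) (fun e => hq (e ▸ b.2))
  obtain ⟨z, hz⟩ := walk_ivt hstep' w k h1 h2
  exact ⟨z.1, z.2, hz⟩

include hstep ginj in
/-- Two disjoint good sets are separated, one way or the other. -/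
lemma sep_total {A B : Set V} (hA : GoodSet G p q A) (hB : GoodSet G p q B)
    (hd : Disjoint A B) : SepLt g A B ∨ SepLt g B A := by
  have hne : ∀ a ∈ A, ∀ b ∈ B, g a ≠ g b := by
    intro a ha b hb h
    have : a = b := ginj (fun e => hA.1 (e ▸ ha)) (fun e => hA.2.1 (e ▸ ha))
      (fun e => hB.1 (e ▸ hb)) (fun e => hB.2.1 (e ▸ hb)) h
    exact Set.disjoint_left.mp hd ha (this ▸ hb)
  by_contra hcon
  simp only [SepLt, not_or, not_forall, not_lt, exists_prop] at hcon
  obtain ⟨⟨a0, ha0, b0, hb0, h0⟩, ⟨b1, hb1, a1, ha1, h1⟩⟩ := hcon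
  have h0' : g b0 < g a0 := lt_of_le_of_ne h0 (fun e => hne a0 ha0 b0 hb0 e.symm)
  have h1' : g a1 < g b1 := lt_of_le_of_ne h1 (hne a1 ha1 b1 hb1)
  rcases le_or_gt (g a1) (g b0) with h | h
  · obtain ⟨z, hz, hzk⟩ := set_ivt hstep hA ha1 ha0 h h0'.le
    have : z = b0 := ginj (fun e => hA.1 (e ▸ hz)) (fun e => hA.2.1 (e ▸ hz))
      (fun e => hB.1 (e ▸ hb0)) (fun e => hB.2.1 (e ▸ hb0)) hzk
    exact Set.disjoint_left.mp hd hz (this ▸ hb0)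
  · obtain ⟨z, hz, hzk⟩ := set_ivt hstep hB hb0 hb1 h.le h1'.le
    have : z = a1 := ginj (fun e => hB.1 (e ▸ hz)) (fun e => hB.2.1 (e ▸ hz))
      (fun e => hA.1 (e ▸ ha1)) (fun e => hA.2.1 (e ▸ ha1)) hzk
    exact Set.disjoint_left.mp hd (this ▸ ha1) hz

include hstep in
/-- If `A < B < C` then there is no edge between `A` and `C`. -/
lemma no_between {A B C : Set V} (hA : GoodSet G p q A) (hC : GoodSet G p q C)
    (hBne : B.Nonempty) (s1 : SepLt g A B) (s2 : SepLt g B C) : ¬ Link G A C := by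
  rintro ⟨u, hu, v, hv, hadj⟩
  obtain ⟨b, hb⟩ := hBne
  have h1 := s1 u hu b hb
  have h2 := s2 b hb v hv
  rcases hstep hadj (fun e => hA.1 (e ▸ hu)) (fun e => hA.2.1 (e ▸ hu))
    (fun e => hC.1 (e ▸ hv)) (fun e => hC.2.1 (e ▸ hv)) with h | h <;> omega

include hstep ginj in
lemma same_side_lt {A B X : Set V} (hA : GoodSet G p q A) (hB : GoodSet G p q B)
    (hX : GoodSet G p q X) (hd : Disjoint A B)
    (sA : SepLt g A X) (sB : SepLt g B X) (lA : Link G X A) (lB : Link G X B) : False := by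
  rcases sep_total hstep ginj hA hB hd with s | s
  · exact no_between hstep hA hX hB.2.2.2 s sB (link_symm lA)
  · exact no_between hstep hB hX hA.2.2.2 s sA (link_symm lB)

include hstep ginj in
lemma same_side_gt {A B X : Set V} (hA : GoodSet G p q A) (hB : GoodSet G p q B)
    (hX : GoodSet G p q X) (hd : Disjoint A B)
    (sA : SepLt g X A) (sB : SepLt g X B) (lA : Link G X A) (lB : Link G X B) : False := by
  rcases sep_total hstep ginj hA hB hd with s | s
  · exact no_between hstep hX hB hA.2.2.2 sA s lB
  · exact no_between hstep hX hA hB.2.2.2 sB s lA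

include hstep ginj in
/-- A good set cannot be linked to three pairwise disjoint good sets. -/
lemma star_contra {X Y1 Y2 Y3 : Set V} (hX : GoodSet G p q X)
    (h1 : GoodSet G p q Y1) (h2 : GoodSet G p q Y2) (h3 : GoodSet G p q Y3)
    (d1 : Disjoint X Y1) (d2 : Disjoint X Y2) (d3 : Disjoint X Y3)
    (d12 : Disjoint Y1 Y2) (d13 : Disjoint Y1 Y3) (d23 : Disjoint Y2 Y3)
    (l1 : Link G X Y1) (l2 : Link G X Y2) (l3 : Link G X Y3) : False := by
  rcases sep_total hstep ginj h1 hX d1.symm with s1 | s1 <;>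
    rcases sep_total hstep ginj h2 hX d2.symm with s2 | s2 <;>
    rcases sep_total hstep ginj h3 hX d3.symm with s3 | s3
  · exact same_side_lt hstep ginj h1 h2 hX d12 s1 s2 l1 l2
  · exact same_side_lt hstep ginj h1 h2 hX d12 s1 s2 l1 l2
  · exact same_side_lt hstep ginj h1 h3 hX d13 s1 s3 l1 l3
  · exact same_side_gt hstep ginj h2 h3 hX d23 s2 s3 l2 l3
  · exact same_side_lt hstep ginj h2 h3 hX d23 s2 s3 l2 l3
  · exact same_side_gt hstep ginj h1 h3 hX d13 s1 s3 l1 l3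
  · exact same_side_gt hstep ginj h1 h2 hX d12 s1 s2 l1 l2
  · exact same_side_gt hstep ginj h1 h2 hX d12 s1 s2 l1 l2

include hstep ginj in
lemma quad_aux {A1 A2 B1 B2 : Set V}
    (hA1 : GoodSet G p q A1) (hA2 : GoodSet G p q A2)
    (hB1 : GoodSet G p q B1) (hB2 : GoodSet G p q B2)
    (dA : Disjoint A1 A2)
    (d11 : Disjoint A1 B1) (d12 : Disjoint A1 B2)
    (d21 : Disjoint A2 B1) (d22 : Disjoint A2 B2)
    (l11 : Link G A1 B1) (l12 : Link G A1 B2)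
    (l21 : Link G A2 B1) (l22 : Link G A2 B2)
    (sB : SepLt g B1 B2) : False := by
  have key : ∀ {A : Set V}, GoodSet G p q A → Disjoint A B1 → Disjoint A B2 →
      Link G A B1 → Link G A B2 → SepLt g B1 A ∧ SepLt g A B2 := by
    intro A hA e1 e2 k1 k2
    rcases sep_total hstep ginj hA hB1 e1 with s | s
    · exact absurd k2 (no_between hstep hA hB2 hB1.2.2.2 s sB)
    · rcases sep_total hstep ginj hA hB2 e2 with t | t
      · exact ⟨s, t⟩
      · exact absurd (link_symm k1) (no_between hstep hB1 hA hB2.2.2.2 sB t)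
  obtain ⟨s1, t1⟩ := key hA1 d11 d12 l11 l12
  obtain ⟨s2, t2⟩ := key hA2 d21 d22 l21 l22
  rcases sep_total hstep ginj hA1 hA2 dA with s | s
  · exact absurd l12 (no_between hstep hA1 hB2 hA2.2.2.2 s t2)
  · exact absurd l22 (no_between hstep hA2 hB2 hA1.2.2.2 s t1)

include hstep ginj in
/-- Four good sets cannot form a `K₂,₂` link pattern. -/
lemma quad_contra {A1 A2 B1 B2 : Set V}
    (hA1 : GoodSet G p q A1) (hA2 : GoodSet G p q A2)
    (hB1 : GoodSet G p q B1) (hB2 : GoodSet G p q B2)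
    (dA : Disjoint A1 A2) (dB : Disjoint B1 B2)
    (d11 : Disjoint A1 B1) (d12 : Disjoint A1 B2)
    (d21 : Disjoint A2 B1) (d22 : Disjoint A2 B2)
    (l11 : Link G A1 B1) (l12 : Link G A1 B2)
    (l21 : Link G A2 B1) (l22 : Link G A2 B2) : False := by
  rcases sep_total hstep ginj hB1 hB2 dB with s | s
  · exact quad_aux hstep ginj hA1 hA2 hB1 hB2 dA d11 d12 d21 d22 l11 l12 l21 l22 s
  · exact quad_aux hstep ginj hA1 hA2 hB2 hB1 dA d12 d11 d22 d21 l12 l11 l22 l21 s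

/-- At most one branch set contains `p` and at most one contains `q`. -/
lemma poles_helper {W : Type*} [Inhabited W] (f : W → Set V)
    (hdisj : Pairwise fun w₁ w₂ => Disjoint (f w₁) (f w₂)) :
    ∃ w1 w2 : W, ∀ w, w ≠ w1 → w ≠ w2 → p ∉ f w ∧ q ∉ f w := by
  classical
  by_cases h1 : ∃ w, p ∈ f w
  · obtain ⟨w1, hw1⟩ := h1
    by_cases h2 : ∃ w, q ∈ f w
    · obtain ⟨w2, hw2⟩ := h2
      refine ⟨w1, w2, fun w e1 e2 => ⟨fun hp => ?_, fun hq => ?_⟩⟩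
      · exact Set.disjoint_left.mp (hdisj e1) hp hw1
      · exact Set.disjoint_left.mp (hdisj e2) hq hw2
    · refine ⟨w1, w1, fun w e1 _ => ⟨fun hp => ?_, fun hq => h2 ⟨w, hq⟩⟩⟩
      exact Set.disjoint_left.mp (hdisj e1) hp hw1
  · by_cases h2 : ∃ w, q ∈ f w
    · obtain ⟨w2, hw2⟩ := h2
      refine ⟨w2, w2, fun w e1 _ => ⟨fun hp => h1 ⟨w, hp⟩, fun hq => ?_⟩⟩
      exact Set.disjoint_left.mp (hdisj e1) hq hw2
    · exact ⟨default, default, fun w _ _ => ⟨fun hp => h1 ⟨w, hp⟩, fun hq => h2 ⟨w, hq⟩⟩⟩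

include hstep ginj in
lemma noK5 : ¬ IsMinor (completeGraph (Fin 5)) G := by
  rintro ⟨f, hne, hconn, hdisj, hadj⟩
  obtain ⟨w1, w2, hgood⟩ := poles_helper (p := p) (q := q) f hdisj
  have gs : ∀ w, w ≠ w1 → w ≠ w2 → GoodSet G p q (f w) := fun w e1 e2 =>
    ⟨(hgood w e1 e2).1, (hgood w e1 e2).2, hconn w, hne w⟩
  obtain ⟨a, b, c, hab, hac, hbc, ha1, ha2, hb1, hb2, hc1, hc2⟩ := fin5_avoid2 w1 w2
  have hA := gs a ha1 ha2
  have hB := gs b hb1 hb2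
  have hC := gs c hc1 hc2
  have lab : Link G (f a) (f b) := hadj hab
  have lac : Link G (f a) (f c) := hadj hac
  have lbc : Link G (f b) (f c) := hadj hbc
  rcases sep_total hstep ginj hA hB (hdisj hab) with s1 | s1 <;>
    rcases sep_total hstep ginj hA hC (hdisj hac) with s2 | s2 <;>
    rcases sep_total hstep ginj hB hC (hdisj hbc) with s3 | s3
  · exact no_between hstep hA hC hB.2.2.2 s1 s3 lac
  · exact no_between hstep hA hB hC.2.2.2 s2 s3 lab
  · exact no_between hstep hC hB hA.2.2.2 s2 s1 (link_symm lbc)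
  · exact no_between hstep hC hB hA.2.2.2 s2 s1 (link_symm lbc)
  · exact no_between hstep hB hC hA.2.2.2 s1 s2 lbc
  · exact no_between hstep hB hC hA.2.2.2 s1 s2 lbc
  · exact no_between hstep hB hA hC.2.2.2 s3 s2 (link_symm lab)
  · exact no_between hstep hC hA hB.2.2.2 s3 s1 (link_symm lac)

include hstep ginj in
lemma noK33 : ¬ IsMinor (completeBipartiteGraph (Fin 3) (Fin 3)) G := by
  rintro ⟨f, hne, hconn, hdisj, hadj⟩
  obtain ⟨w1, w2, hgood⟩ := poles_helper (p := p) (q := q) f hdisj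
  have gs : ∀ w, w ≠ w1 → w ≠ w2 → GoodSet G p q (f w) := fun w e1 e2 =>
    ⟨(hgood w e1 e2).1, (hgood w e1 e2).2, hconn w, hne w⟩
  have links : ∀ (a b : Fin 3), Link G (f (.inl a)) (f (.inr b)) := by
    intro a b
    exact hadj (by simp [completeBipartiteGraph])
  have dLR : ∀ (a b : Fin 3), Disjoint (f (.inl a)) (f (.inr b)) := fun a b =>
    hdisj (by simp)
  have dLL : ∀ {a b : Fin 3}, a ≠ b → Disjoint (f (.inl a)) (f (.inl b)) := fun h =>
    hdisj (by simpa)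
  have dRR : ∀ {a b : Fin 3}, a ≠ b → Disjoint (f (.inr a)) (f (.inr b)) := fun h =>
    hdisj (by simpa)
  rcases w1 with a1 | b1 <;> rcases w2 with a2 | b2
  · -- both poles on the left side
    obtain ⟨a, ha1, ha2⟩ := fin3_avoid2 a1 a2
    have hX := gs (.inl a) (by simpa) (by simpa)
    have hY : ∀ b : Fin 3, GoodSet G p q (f (.inr b)) := fun b =>
      gs (.inr b) (by simp) (by simp)
    exact star_contra hstep ginj hX (hY 0) (hY 1) (hY 2)
      (dLR a 0) (dLR a 1) (dLR a 2)
      (dRR (by decide)) (dRR (by decide)) (dRR (by decide))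
      (links a 0) (links a 1) (links a 2)
  · -- one pole each side
    obtain ⟨x, y, hxy, hx, hy⟩ := fin3_avoid1 a1
    obtain ⟨u, v, huv, hu, hv⟩ := fin3_avoid1 b2
    exact quad_contra hstep ginj
      (gs (.inl x) (by simpa) (by simp)) (gs (.inl y) (by simpa) (by simp))
      (gs (.inr u) (by simp) (by simpa)) (gs (.inr v) (by simp) (by simpa))
      (dLL hxy) (dRR huv) (dLR x u) (dLR x v) (dLR y u) (dLR y v)
      (links x u) (links x v) (links y u) (links y v)
  · -- one pole each side (other order)
    obtain ⟨x, y, hxy, hx, hy⟩ := fin3_avoid1 a2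
    obtain ⟨u, v, huv, hu, hv⟩ := fin3_avoid1 b1
    exact quad_contra hstep ginj
      (gs (.inl x) (by simp) (by simpa)) (gs (.inl y) (by simp) (by simpa))
      (gs (.inr u) (by simpa) (by simp)) (gs (.inr v) (by simpa) (by simp))
      (dLL hxy) (dRR huv) (dLR x u) (dLR x v) (dLR y u) (dLR y v)
      (links x u) (links x v) (links y u) (links y v)
  · -- both poles on the right side
    obtain ⟨b, hb1, hb2⟩ := fin3_avoid2 b1 b2
    have hX := gs (.inr b) (by simpa) (by simpa)
    have hY : ∀ a : Fin 3, GoodSet G p q (f (.inl a)) := fun a =>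
      gs (.inl a) (by simp) (by simp)
    exact star_contra hstep ginj hX (hY 0) (hY 1) (hY 2)
      ((dLR 0 b).symm) ((dLR 1 b).symm) ((dLR 2 b).symm)
      (dLL (by decide)) (dLL (by decide)) (dLL (by decide))
      (link_symm (links 0 b)) (link_symm (links 1 b)) (link_symm (links 2 b))

end Abstract

lemma mod2 {z m : ℕ} (hm : 0 < m) (hz : z < 2 * m) :
    z % m = if z < m then z else z - m := by
  split_ifs with h
  · exact Nat.mod_eq_of_lt h
  · rw [Nat.mod_eq_sub_mod (le_of_not_gt h), Nat.mod_eq_of_lt (by omega)]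

/-- Position of a cycle vertex along the path obtained by deleting the edge. -/
def gfun (m : ℕ) (j : Fin m) : (Fin m ⊕ Fin 2) → ℕ :=
  fun x => match x with
           | .inl v => ((v - j : Fin m) : ℕ)
           | .inr _ => 0

lemma nonpole {m : ℕ} : ∀ x : Fin m ⊕ Fin 2, x ≠ Sum.inr 0 → x ≠ Sum.inr 1 →
    ∃ a, x = Sum.inl a := by
  rintro (a | t) h0 h1
  · exact ⟨a, rfl⟩
  · exfalso
    have ht := t.isLt
    have ht2 : (t : ℕ) = 0 ∨ (t : ℕ) = 1 := by omega
    rcases ht2 with h | h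
    · exact h0 (congrArg _ (Fin.ext h))
    · exact h1 (congrArg _ (Fin.ext h))

lemma concrete_ginj {m : ℕ} (hm : 4 ≤ m) (j : Fin m) :
    ∀ ⦃u v : Fin m ⊕ Fin 2⦄, u ≠ Sum.inr 0 → u ≠ Sum.inr 1 → v ≠ Sum.inr 0 →
      v ≠ Sum.inr 1 → gfun m j u = gfun m j v → u = v := by
  intro u v hu0 hu1 hv0 hv1 heq
  obtain ⟨a, rfl⟩ := nonpole u hu0 hu1
  obtain ⟨b, rfl⟩ := nonpole v hv0 hv1
  have heq' : ((a - j : Fin m) : ℕ) = ((b - j : Fin m) : ℕ) := heq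
  rw [Fin.sub_def, Fin.sub_def] at heq'
  simp only at heq'
  have ha := a.isLt
  have hb := b.isLt
  have hjlt := j.isLt
  have h0 : 0 < m := by omega
  rw [mod2 h0 (by omega), mod2 h0 (by omega)] at heq'
  have : (a : ℕ) = (b : ℕ) := by split_ifs at heq' <;> omega
  exact congrArg _ (Fin.ext this)

lemma concrete_hstep {m : ℕ} (hm : 4 ≤ m) (i j : Fin m)
    (hij : (j : ℕ) = ((i : ℕ) + 1) % m) :
    ∀ ⦃u v : Fin m ⊕ Fin 2⦄,
      ((Join (cycleGraph m) (⊤ : SimpleGraph (Fin 2))).deleteEdges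
        {s(Sum.inl i, Sum.inl j)}).Adj u v →
      u ≠ Sum.inr 0 → u ≠ Sum.inr 1 → v ≠ Sum.inr 0 → v ≠ Sum.inr 1 →
      (gfun m j u + 1 = gfun m j v ∨ gfun m j v + 1 = gfun m j u) := by
  intro u v hadj hu0 hu1 hv0 hv1
  obtain ⟨a, rfl⟩ := nonpole u hu0 hu1
  obtain ⟨b, rfl⟩ := nonpole v hv0 hv1
  rw [SimpleGraph.deleteEdges_adj] at hadj
  obtain ⟨hadj, hmem⟩ := hadj
  have hc : (cycleGraph m).Adj a b := hadj
  rw [cycleGraph_adj'] at hc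
  simp only [Set.mem_singleton_iff, Sym2.eq_iff, Sum.inl.injEq] at hmem
  show ((a - j : Fin m) : ℕ) + 1 = ((b - j : Fin m) : ℕ) ∨
    ((b - j : Fin m) : ℕ) + 1 = ((a - j : Fin m) : ℕ)
  have hmem' : ¬(((a : ℕ) = (i : ℕ) ∧ (b : ℕ) = (j : ℕ)) ∨
      ((a : ℕ) = (j : ℕ) ∧ (b : ℕ) = (i : ℕ))) := by
    simpa only [Fin.ext_iff] using hmem
  rw [Fin.sub_def, Fin.sub_def] at hc
  rw [Fin.sub_def, Fin.sub_def]
  simp only [Fin.ext_iff] at hc ⊢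
  have ha := a.isLt
  have hb := b.isLt
  have hi := i.isLt
  have hjlt := j.isLt
  have h0 : 0 < m := by omega
  rw [mod2 h0 (by omega), mod2 h0 (by omega)] at hc
  rw [mod2 h0 (by omega), mod2 h0 (by omega)]
  rw [hij] at hmem' ⊢
  rw [mod2 h0 (by omega)] at hmem' ⊢
  split_ifs at hc hmem' ⊢ <;> omega

/-- For every `n ≥ 6`, removing any single cycle edge `vᵢv_{i+1}`
from `Gₙ` yields a planar graph. -/
theorem Gn_minus_cycle_edge_planar (n : ℕ) (hn : 6 ≤ n) (i : Fin (n - 2)) :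
    IsPlanar ((Gn n).deleteEdges {s(Sum.inl i, Sum.inl (i + ⟨1, by omega⟩))}) := by
  have hm : 4 ≤ n - 2 := by omega
  have hij : ((i + ⟨1, by omega⟩ : Fin (n - 2)) : ℕ) = ((i : ℕ) + 1) % (n - 2) := by
    rw [Fin.add_def]
  have hstep := concrete_hstep hm i (i + ⟨1, by omega⟩) hij
  have ginj := concrete_ginj hm (i + ⟨1, by omega⟩) (m := n - 2)
  exact ⟨noK5 hstep ginj, noK33 hstep ginj⟩
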